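/- Let p ≥ 3 be a natural number and let f : ℝ² → ℝ be the polynomial function f(x,y) = x^(2p) + (y² − x)². Then the origin is a strict local minimum of f, and there exists ε₀ > 0 such that for every ε with 0 < ε < ε₀ and every point P ∈ ℝ², the sublevel set D_ε = {q ∈ ℝ² : f(q) ≤ ε} is not star-shaped with respect to P. -/
import Mathlib


private lemma abs_aux {a s : ℝ} (h : a ^ 2 ≤ s ^ 2) (hs : 0 < s) : -s ≤ a ∧ a ≤ s := by
  constructor
  · nlinarith [sq_nonneg (a + s)]
  · nlinarith [sq_nonneg (a - s)]

/-- For `p ≥ 3` and `f(x,y) = x^(2p) + (y² − x)²`, the origin is a strict local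
minimum of `f`, and there exists `ε₀ > 0` such that for every `0 < ε < ε₀` and every point `P`,
the sublevel set `D_ε = {q : f q ≤ ε}` is not star-shaped with respect to `P`. -/
theorem sublevel_not_star_domain (p : ℕ) (hp : 3 ≤ p) (f : ℝ × ℝ → ℝ)
    (hf : ∀ q : ℝ × ℝ, f q = q.1 ^ (2 * p) + (q.2 ^ 2 - q.1) ^ 2) :
    (∀ᶠ q in nhds ((0, 0) : ℝ × ℝ), q ≠ (0, 0) → f (0, 0) < f q) ∧
    ∃ ε₀ > 0, ∀ ε : ℝ, 0 < ε → ε < ε₀ →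
      ∀ P : ℝ × ℝ, ¬ StarConvex ℝ P {q : ℝ × ℝ | f q ≤ ε} := by
  have hp2 : 2 * p ≠ 0 := by omega
  constructor
  · refine Filter.Eventually.of_forall fun q hq => ?_
    obtain ⟨x, y⟩ := q
    rw [hf, hf]
    simp only [zero_pow hp2]
    norm_num
    rcases eq_or_ne x 0 with h1 | h1
    · have h2 : y ≠ 0 := by
        intro h2; exact hq (by simp [h1, h2, Prod.ext_iff])
      have hy : 0 < y ^ 2 := lt_of_le_of_ne (sq_nonneg y) (Ne.symm (pow_ne_zero 2 h2))
      subst h1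
      have h3 : (0:ℝ) < (y ^ 2 - 0) ^ 2 := by nlinarith
      have h4 : (0:ℝ) ≤ (0:ℝ) ^ (2 * p) := by positivity
      nlinarith
    · have hx : 0 < x ^ 2 := lt_of_le_of_ne (sq_nonneg x) (Ne.symm (pow_ne_zero 2 h1))
      have h3 : 0 < x ^ (2 * p) := by
        rw [pow_mul]; exact pow_pos hx p
      nlinarith [sq_nonneg (y ^ 2 - x)]
  · refine ⟨((4096:ℝ) ^ p)⁻¹, by positivity, fun ε hε hε₀ P h => ?_⟩
    have h4p : (0:ℝ) < 4096 ^ p := by positivity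
    have hε1 : ε ≤ 1 := by
      have h1 : (1:ℝ) ≤ 4096 ^ p := one_le_pow₀ (by norm_num)
      have : ((4096:ℝ) ^ p)⁻¹ ≤ 1 := by
        rw [inv_le_one_iff₀]; right; exact h1
      linarith
    set s := Real.sqrt ε with hs_def
    have hs0 : 0 < s := Real.sqrt_pos.mpr hε
    have hs2 : s ^ 2 = ε := Real.sq_sqrt hε.le
    set t := 8 * Real.sqrt s with ht_def
    have ht0 : 0 < t := by positivity
    have ht2 : t ^ 2 = 64 * s := by
      rw [ht_def, mul_pow, Real.sq_sqrt hs0.le]; norm_num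
    -- t ^ (4*p) ≤ ε
    have ht4 : t ^ 4 = 4096 * ε := by nlinarith
    have hεp : ε ^ p ≤ ε ^ 3 := pow_le_pow_of_le_one hε.le hε1 hp
    have hmul : 4096 ^ p * ε < 1 := by
      have := mul_lt_mul_of_pos_left hε₀ h4p
      rwa [mul_inv_cancel₀ (ne_of_gt h4p)] at this
    have ht4p : t ^ (4 * p) ≤ ε := by
      have e1 : t ^ (4 * p) = (4096 * ε) ^ p := by rw [pow_mul, ht4]
      rw [e1, mul_pow]
      calc (4096:ℝ) ^ p * ε ^ p ≤ 4096 ^ p * ε ^ 3 := by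
            exact mul_le_mul_of_nonneg_left hεp h4p.le
        _ ≤ ε := by nlinarith [sq_nonneg ε, mul_pos hε hε]
    -- sign
    obtain ⟨σ, hσ2, hσp⟩ : ∃ σ : ℝ, σ ^ 2 = 1 ∧ σ * P.2 ≤ 0 := by
      rcases le_or_gt P.2 0 with hP2 | hP2
      · exact ⟨1, by norm_num, by linarith [hP2]⟩
      · exact ⟨-1, by norm_num, by nlinarith⟩
    -- Q ∈ D
    have hQ : ((t ^ 2, σ * t) : ℝ × ℝ) ∈ {q : ℝ × ℝ | f q ≤ ε} := by
      have e2 : ((t ^ 2) ^ (2 * p) : ℝ) = t ^ (4 * p) := by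
        rw [← pow_mul, show 2 * (2 * p) = 4 * p by ring]
      have e3 : ((σ * t) ^ 2 : ℝ) = t ^ 2 := by
        rw [mul_pow, hσ2, one_mul]
      simp only [Set.mem_setOf_eq, hf]
      simp only [e3, e2]
      simpa using ht4p
    -- membership of segment points
    have mem : ∀ c : ℝ, 0 ≤ c → c ≤ 1 →
        (((1 - c) * P.2 + c * (σ * t)) ^ 2 - ((1 - c) * P.1 + c * t ^ 2)) ^ 2 ≤ s ^ 2 := by
      intro c hc0 hc1
      have hm := h hQ (by linarith : (0:ℝ) ≤ 1 - c) hc0 (by ring)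
      simp only [Set.mem_setOf_eq, hf, Prod.fst_add, Prod.snd_add, Prod.smul_fst,
        Prod.smul_snd, smul_eq_mul] at hm
      have hnn : (0:ℝ) ≤ ((1 - c) * P.1 + c * t ^ 2) ^ (2 * p) := by
        rw [pow_mul]; positivity
      rw [hs2]; linarith
    -- abs bounds
    have bound : ∀ c : ℝ, 0 ≤ c → c ≤ 1 →
        -s ≤ ((1 - c) * P.2 + c * (σ * t)) ^ 2 - ((1 - c) * P.1 + c * t ^ 2) ∧
        ((1 - c) * P.2 + c * (σ * t)) ^ 2 - ((1 - c) * P.1 + c * t ^ 2) ≤ s := by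
      intro c hc0 hc1
      exact abs_aux (mem c hc0 hc1) hs0
    -- the three parameters
    set p' := σ * P.2 with hp'_def
    have hd : 0 < t - p' := by linarith
    set c1 := (t / 2 - p') / (t - p') with hc1_def
    have hc10 : 0 ≤ c1 := div_nonneg (by linarith) hd.le
    have hc11 : c1 ≤ 1 := by
      rw [div_le_one hd]; linarith
    set c2 := (c1 + 1) / 2 with hc2_def
    have hc20 : 0 ≤ c2 := by rw [hc2_def]; linarith
    have hc21 : c2 ≤ 1 := by rw [hc2_def]; linarith
    -- y-coordinates squared
    have hy : ∀ c : ℝ, ((1 - c) * P.2 + c * (σ * t)) ^ 2 = ((1 - c) * p' + c * t) ^ 2 := by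
      intro c
      have hlin : (1 - c) * p' + c * t = σ * ((1 - c) * P.2 + c * (σ * t)) := by
        rw [hp'_def]; linear_combination (-(c * t)) * hσ2
      rw [hlin, mul_pow, hσ2, one_mul]
    have hy1 : (1 - c1) * p' + c1 * t = t / 2 := by
      rw [hc1_def]; field_simp; ring
    have hy3 : (1 - (1:ℝ)) * p' + 1 * t = t := by ring
    have hy2 : (1 - c2) * p' + c2 * t = 3 * t / 4 := by
      rw [hc2_def]
      have : (1 - (c1 + 1) / 2) * p' + (c1 + 1) / 2 * t
          = (((1 - c1) * p' + c1 * t) + ((1 - (1:ℝ)) * p' + 1 * t)) / 2 := by ring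
      rw [this, hy1]; ring
    -- x-coordinates
    have hb1 := bound c1 hc10 hc11
    have hb2 := bound c2 hc20 hc21
    have hb3 := bound 1 (by norm_num) (by norm_num)
    rw [hy c1, hy1] at hb1
    rw [hy c2, hy2] at hb2
    rw [hy 1, hy3] at hb3
    -- x affine: x(c2) = (x(c1)+x(c3))/2
    have hxaff : (1 - c2) * P.1 + c2 * t ^ 2
        = (((1 - c1) * P.1 + c1 * t ^ 2) + ((1 - (1:ℝ)) * P.1 + 1 * t ^ 2)) / 2 := by
      rw [hc2_def]; ring
    rw [hxaff] at hb2
    obtain ⟨hb1l, hb1r⟩ := hb1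
    obtain ⟨hb2l, hb2r⟩ := hb2
    obtain ⟨hb3l, hb3r⟩ := hb3
    linarith [hb1l, hb1r, hb2l, hb2r, hb3l, hb3r, ht2, hs0]
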